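/- Let p ≥ 3 be a prime. Define V₁ = { ∑_{k=0}^∞ a_k p^k : a ∈ {0,1}^ℕ } ⊆ ℤ_p and W₁ = { ∑_{k=0}^∞ a_k p^k : a ∈ {0,2}^ℕ } ⊆ ℤ_p, where the series are taken in ℤ_p. Then V₁ and W₁ are compact subsets of ℤ_p, neither V₁ nor W₁ has an isolated point, and V₁ ∩ W₁ = {0}. -/

import Mathlib

set_option maxHeartbeats 1000000

namespace CantorPadicAux

open Filter Topology

variable {p : ℕ} [Fact p.Prime]

noncomputable def gsum (p : ℕ) [Fact p.Prime] (a : ℕ → ℕ) : ℤ_[p] :=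
  ∑' k : ℕ, (a k : ℤ_[p]) * (p : ℤ_[p]) ^ k

lemma gsum_summable (a : ℕ → ℕ) :
    Summable (fun k : ℕ => (a k : ℤ_[p]) * (p : ℤ_[p]) ^ k) := by
  have hp1 : (1:ℝ) < p := by exact_mod_cast (Fact.out : p.Prime).one_lt
  refine Summable.of_norm_bounded
    (summable_geometric_of_lt_one (by positivity) (inv_lt_one_of_one_lt₀ hp1)) ?_
  intro k
  rw [norm_mul]
  calc ‖(a k : ℤ_[p])‖ * ‖(p:ℤ_[p]) ^ k‖ ≤ 1 * ‖(p:ℤ_[p]) ^ k‖ := by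
        gcongr; exact PadicInt.norm_le_one _
    _ = ((p:ℝ)⁻¹) ^ k := by rw [one_mul, norm_pow, PadicInt.norm_p]

lemma gsum_shift (a : ℕ → ℕ) (n : ℕ) :
    gsum p a = (∑ k ∈ Finset.range n, (a k : ℤ_[p]) * (p:ℤ_[p]) ^ k)
      + (p:ℤ_[p]) ^ n * gsum p (fun k => a (k + n)) := by
  have h := Summable.sum_add_tsum_nat_add n (gsum_summable (p := p) a)
  rw [gsum, ← h]
  congr 1
  calc ∑' (i : ℕ), ((a (i + n) : ℤ_[p]) * (p:ℤ_[p]) ^ (i + n))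
      = ∑' (i : ℕ), (p:ℤ_[p]) ^ n * ((a (i + n) : ℤ_[p]) * (p:ℤ_[p]) ^ i) :=
        tsum_congr fun k => by rw [pow_add]; ring
    _ = (p:ℤ_[p]) ^ n * gsum p (fun k => a (k + n)) := by
        rw [gsum]
        exact (gsum_summable (p := p) (fun k => a (k + n))).tsum_mul_left ((p:ℤ_[p]) ^ n)

lemma norm_gsum_le_one (a : ℕ → ℕ) : ‖gsum p a‖ ≤ 1 := PadicInt.norm_le_one _

lemma gsum_sub (a b : ℕ → ℕ) (n : ℕ) (h : ∀ k, k ≠ n → a k = b k) :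
    gsum p b = gsum p a + ((b n : ℤ_[p]) - (a n : ℤ_[p])) * (p:ℤ_[p]) ^ n := by
  rw [gsum_shift a (n+1), gsum_shift b (n+1)]
  have ht : (fun k => b (k + (n+1))) = (fun k => a (k + (n+1))) := by
    funext k; exact (h _ (by omega)).symm
  rw [ht, Finset.sum_range_succ, Finset.sum_range_succ]
  have hs : ∑ k ∈ Finset.range n, (b k : ℤ_[p]) * (p:ℤ_[p]) ^ k
      = ∑ k ∈ Finset.range n, (a k : ℤ_[p]) * (p:ℤ_[p]) ^ k := by
    refine Finset.sum_congr rfl fun k hk => ?_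
    rw [h k (by simp only [Finset.mem_range] at hk; omega)]
  rw [hs]; ring

lemma gsum_dist (a b : ℕ → ℕ) (n : ℕ) (h : ∀ k < n, a k = b k) :
    ‖gsum p a - gsum p b‖ ≤ 2 * ((p:ℝ)⁻¹) ^ n := by
  have hs : ∑ k ∈ Finset.range n, (a k : ℤ_[p]) * (p:ℤ_[p]) ^ k
      = ∑ k ∈ Finset.range n, (b k : ℤ_[p]) * (p:ℤ_[p]) ^ k := by
    refine Finset.sum_congr rfl fun k hk => ?_
    rw [h k (Finset.mem_range.mp hk)]
  have key : gsum p a - gsum p b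
      = (p:ℤ_[p]) ^ n * (gsum p (fun k => a (k+n)) - gsum p (fun k => b (k+n))) := by
    rw [gsum_shift a n, gsum_shift b n, hs]; ring
  rw [key, norm_mul, norm_pow, PadicInt.norm_p]
  rw [mul_comm]
  gcongr
  calc ‖gsum p (fun k => a (k+n)) - gsum p (fun k => b (k+n))‖
      ≤ ‖gsum p (fun k => a (k+n))‖ + ‖gsum p (fun k => b (k+n))‖ := norm_sub_le _ _
    _ ≤ 1 + 1 := add_le_add (norm_gsum_le_one _) (norm_gsum_le_one _)
    _ = 2 := by norm_num

lemma gsum_continuous : Continuous (gsum p) := by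
  rw [continuous_iff_continuousAt]
  intro a
  rw [ContinuousAt, Metric.tendsto_nhds]
  intro ε hε
  have hp1 : (1:ℝ) < p := by exact_mod_cast (Fact.out : p.Prime).one_lt
  have htend : Tendsto (fun n : ℕ => 2 * ((p:ℝ)⁻¹) ^ n) atTop (𝓝 0) := by
    have := tendsto_pow_atTop_nhds_zero_of_lt_one (by positivity)
      (inv_lt_one_of_one_lt₀ hp1)
    simpa using this.const_mul 2
  obtain ⟨n, hn⟩ := (htend.eventually (gt_mem_nhds hε)).exists
  have hmem : {b : ℕ → ℕ | ∀ k < n, b k = a k} ∈ 𝓝 a := by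
    have : Set.pi ↑(Finset.range n) (fun k => ({a k} : Set ℕ)) ∈ 𝓝 a := by
      refine set_pi_mem_nhds (Finset.range n).finite_toSet fun k _ => ?_
      simp [nhds_discrete]
    refine Filter.mem_of_superset this ?_
    intro b hb k hk
    exact hb k (by simpa using hk)
  filter_upwards [hmem] with b hb
  rw [dist_eq_norm]
  exact lt_of_le_of_lt (gsum_dist b a n hb) hn

lemma compact_digit_set (d : ℕ) :
    IsCompact (gsum p '' {a | ∀ k, a k = 0 ∨ a k = d}) := by
  have h1 : {a : ℕ → ℕ | ∀ k, a k = 0 ∨ a k = d}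
      = Set.pi Set.univ (fun _ => ({0, d} : Set ℕ)) := by
    ext a; simp [Set.mem_pi]
  have h2 : IsCompact {a : ℕ → ℕ | ∀ k, a k = 0 ∨ a k = d} := by
    rw [h1]; exact isCompact_univ_pi fun _ => (Set.toFinite _).isCompact
  exact h2.image gsum_continuous

lemma preperfect_digit_set (d : ℕ) (hd : d ≠ 0) :
    Preperfect (gsum p '' {a | ∀ k, a k = 0 ∨ a k = d}) := by
  intro x hx
  rw [accPt_iff_nhds]
  intro U hU
  obtain ⟨a, ha, rfl⟩ := hx
  obtain ⟨ε, hε, hball⟩ := Metric.mem_nhds_iff.mp hU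
  have hp1 : (1:ℝ) < p := by exact_mod_cast (Fact.out : p.Prime).one_lt
  obtain ⟨n, hn⟩ : ∃ n : ℕ, ((p:ℝ)⁻¹) ^ n < ε :=
    exists_pow_lt_of_lt_one hε (inv_lt_one_of_one_lt₀ hp1)
  set b : ℕ → ℕ := Function.update a n (if a n = 0 then d else 0) with hbdef
  have hbk : ∀ k, k ≠ n → a k = b k := fun k hk => (Function.update_of_ne hk _ _).symm
  have hb : ∀ k, b k = 0 ∨ b k = d := by
    intro k
    by_cases hk : k = n
    · subst hk; simp only [hbdef, Function.update_self]; split <;> tauto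
    · rw [← hbk k hk]; exact ha k
  have hbn : b n = if a n = 0 then d else 0 := by simp [hbdef]
  have hdiff := gsum_sub (p := p) a b n hbk
  have hc : ((b n : ℤ_[p]) - (a n : ℤ_[p])) ≠ 0 := by
    rcases ha n with h0 | h0 <;>
      simp only [hbn, h0, if_pos, if_neg, Nat.cast_zero, sub_zero, zero_sub] <;>
    · first
      | (exact Nat.cast_ne_zero.mpr hd)
      | (rw [if_neg (by omega)]
         simp only [Nat.cast_zero, zero_sub, neg_ne_zero]
         exact Nat.cast_ne_zero.mpr (by omega))
  have hpne : ((p:ℤ_[p]) ^ n) ≠ 0 :=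
    pow_ne_zero _ (Nat.cast_ne_zero.mpr (Fact.out : p.Prime).pos.ne')
  refine ⟨gsum p b, ⟨?_, ⟨b, hb, rfl⟩⟩, ?_⟩
  · apply hball
    rw [Metric.mem_ball, dist_eq_norm, hdiff, add_sub_cancel_left, norm_mul,
      norm_pow, PadicInt.norm_p]
    calc ‖(b n : ℤ_[p]) - (a n : ℤ_[p])‖ * ((p:ℝ)⁻¹) ^ n
        ≤ 1 * ((p:ℝ)⁻¹) ^ n := by gcongr; exact PadicInt.norm_le_one _
      _ = ((p:ℝ)⁻¹) ^ n := one_mul _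
      _ < ε := hn
  · rw [hdiff]
    intro hcon
    nth_rewrite 2 [← add_zero (gsum p a)] at hcon
    exact mul_ne_zero hc hpne (add_left_cancel hcon)

lemma gsum_head (a b : ℕ → ℕ) (ha : a 0 < p) (hb : b 0 < p)
    (h : gsum p a = gsum p b) :
    a 0 = b 0 ∧ gsum p (fun k => a (k+1)) = gsum p (fun k => b (k+1)) := by
  have h1 : gsum p a = (a 0 : ℤ_[p]) + (p:ℤ_[p]) * gsum p (fun k => a (k+1)) := by
    have := gsum_shift (p := p) a 1
    simpa using this
  have h2 : gsum p b = (b 0 : ℤ_[p]) + (p:ℤ_[p]) * gsum p (fun k => b (k+1)) := by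
    have := gsum_shift (p := p) b 1
    simpa using this
  have head : (a 0 : ZMod p) = (b 0 : ZMod p) := by
    have hz := congrArg (PadicInt.toZMod (p := p)) (h1 ▸ h2 ▸ h)
    simpa [map_add, map_mul, map_natCast, ZMod.natCast_self] using hz
  have heq : a 0 = b 0 := by
    have := congrArg ZMod.val head
    rwa [ZMod.val_cast_of_lt ha, ZMod.val_cast_of_lt hb] at this
  refine ⟨heq, ?_⟩
  have hp0 : (p : ℤ_[p]) ≠ 0 := Nat.cast_ne_zero.mpr (Fact.out : p.Prime).pos.ne'
  apply mul_left_cancel₀ hp0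
  have h' := h
  rw [h1, h2, heq] at h'
  exact add_left_cancel h'

lemma digits_zero (hp3 : 3 ≤ p) :
    ∀ n (a b : ℕ → ℕ), (∀ k, a k = 0 ∨ a k = 1) → (∀ k, b k = 0 ∨ b k = 2) →
      gsum p a = gsum p b → a n = 0 ∧ b n = 0 := by
  intro n
  induction n with
  | zero =>
    intro a b ha hb h
    have h0 := gsum_head a b (by rcases ha 0 with h'|h' <;> omega)
      (by rcases hb 0 with h'|h' <;> omega) h
    rcases ha 0 with h1|h1 <;> rcases hb 0 with h2|h2 <;> omega
  | succ n ih =>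
    intro a b ha hb h
    have h0 := gsum_head a b (by rcases ha 0 with h'|h' <;> omega)
      (by rcases hb 0 with h'|h' <;> omega) h
    exact ih (fun k => a (k+1)) (fun k => b (k+1)) (fun k => ha _) (fun k => hb _) h0.2

end CantorPadicAux

open CantorPadicAux in
/-- **The Cantor-like sets `V₁` and `W₁` in `ℤ_p`** (Example `exa1`).
For a prime `p ≥ 3`, the sets of `p`-adic integers whose digit expansions use only the
digits `{0,1}` (resp. `{0,2}`) are compact, have no isolated points, and intersect
exactly in `{0}`. -/
theorem cantor_sets_in_padic_integers (p : ℕ) [Fact p.Prime] (hp : 3 ≤ p)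
    (V₁ W₁ : Set ℤ_[p])
    (hV₁ : V₁ = {x | ∃ a : ℕ → ℕ, (∀ k, a k = 0 ∨ a k = 1) ∧
      x = ∑' k : ℕ, (a k : ℤ_[p]) * (p : ℤ_[p]) ^ k})
    (hW₁ : W₁ = {x | ∃ a : ℕ → ℕ, (∀ k, a k = 0 ∨ a k = 2) ∧
      x = ∑' k : ℕ, (a k : ℤ_[p]) * (p : ℤ_[p]) ^ k}) :
    IsCompact V₁ ∧ IsCompact W₁ ∧ Preperfect V₁ ∧ Preperfect W₁ ∧
      V₁ ∩ W₁ = {0} := by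
  have hV' : V₁ = gsum p '' {a | ∀ k, a k = 0 ∨ a k = 1} := by
    rw [hV₁]; ext x
    constructor
    · rintro ⟨a, h1, rfl⟩; exact ⟨a, h1, rfl⟩
    · rintro ⟨a, h1, rfl⟩; exact ⟨a, h1, rfl⟩
  have hW' : W₁ = gsum p '' {a | ∀ k, a k = 0 ∨ a k = 2} := by
    rw [hW₁]; ext x
    constructor
    · rintro ⟨a, h1, rfl⟩; exact ⟨a, h1, rfl⟩
    · rintro ⟨a, h1, rfl⟩; exact ⟨a, h1, rfl⟩
  refine ⟨hV' ▸ compact_digit_set 1, hW' ▸ compact_digit_set 2,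
    hV' ▸ preperfect_digit_set 1 one_ne_zero,
    hW' ▸ preperfect_digit_set 2 two_ne_zero, ?_⟩
  ext x
  simp only [Set.mem_inter_iff, Set.mem_singleton_iff]
  constructor
  · rintro ⟨hxV, hxW⟩
    rw [hV₁] at hxV; rw [hW₁] at hxW
    obtain ⟨a, ha, hxa⟩ := hxV
    obtain ⟨b, hb, hxb⟩ := hxW
    have hab : gsum p a = gsum p b := by rw [gsum, ← hxa, hxb]; rfl
    have hz : ∀ n, a n = 0 := fun n => (digits_zero hp n a b ha hb hab).1
    rw [hxa]
    have : (fun k : ℕ => (a k : ℤ_[p]) * (p:ℤ_[p]) ^ k) = fun _ => 0 := by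
      funext k; rw [hz k]; simp
    rw [this, tsum_zero]
  · rintro rfl
    constructor
    · rw [hV₁]
      exact ⟨fun _ => 0, fun k => Or.inl rfl, by simp⟩
    · rw [hW₁]
      exact ⟨fun _ => 0, fun k => Or.inl rfl, by simp⟩
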